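/- If β > p|θ_0| + hσ²/(2|θ_0|), then the solution v_β of the IVP (σ²/2) v'(x) = β − h x + φ(p − v(x)), v(0) = 0, with φ(y) ≥ θ_0 y and θ_0 < 0, is strictly increasing on [0, ∞): v_β'(x) > 0 for all x ≥ 0. -/

import Mathlib

/-- If `β > p|θ₀| + hσ²/(2|θ₀|)`, then the solution `v` of the IVP
`(σ²/2) v' x = β − h x + φ(p − v x)`, `v 0 = 0`, with `φ(y) ≥ θ₀ y` and `θ₀ < 0`,
is strictly increasing: `v' x > 0` for all `x ≥ 0`. -/
theorem stmt13 (σ h p β θ₀ : ℝ) (hσ : 0 < σ) (hh : 0 < h) (hp : 0 < p) (hθ₀ : θ₀ < 0)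
    (hβ : β > p * |θ₀| + h * σ ^ 2 / (2 * |θ₀|))
    (φ : ℝ → ℝ) (hφ : Continuous φ) (hφlb : ∀ y : ℝ, θ₀ * y ≤ φ y)
    (v v' : ℝ → ℝ)
    (hderiv : ∀ x : ℝ, 0 ≤ x → HasDerivAt v (v' x) x)
    (hode : ∀ x : ℝ, 0 ≤ x → σ ^ 2 / 2 * v' x = β - h * x + φ (p - v x))
    (hinit : v 0 = 0) :
    ∀ x : ℝ, 0 ≤ x → 0 < v' x := by
  have habs : |θ₀| = -θ₀ := abs_of_neg hθ₀
  rw [habs] at hβ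
  have hθ0' : (0:ℝ) < -θ₀ := by linarith
  have hθ₀ne : θ₀ ≠ 0 := ne_of_lt hθ₀
  have hσ2 : (0:ℝ) < σ^2 := by positivity
  have hσ2ne : σ^2 ≠ 0 := ne_of_gt hσ2
  set lam : ℝ := -2*θ₀/σ^2 with hlamdef
  have hlam : 0 < lam := div_pos (by linarith) hσ2
  set A : ℝ := -β/θ₀ - p - h*σ^2/(2*θ₀^2) with hA
  set C : ℝ := β/θ₀ + p + h*σ^2/(2*θ₀^2) with hC
  set g : ℝ → ℝ := fun x => A * Real.exp (lam*x) - h/θ₀ * x + C with hg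
  set g' : ℝ → ℝ := fun x => A * (lam * Real.exp (lam*x)) - h/θ₀ with hg'
  have hgderiv : ∀ x : ℝ, HasDerivAt g (g' x) x := by
    intro x
    have h1 : HasDerivAt (fun y : ℝ => Real.exp (lam*y)) (Real.exp (lam*x) * lam) x := by
      simpa using ((hasDerivAt_id x).const_mul lam).exp
    have h2 : HasDerivAt (fun y : ℝ => h/θ₀ * y) (h/θ₀) x := by
      simpa using (hasDerivAt_id x).const_mul (h/θ₀)
    have h3 := ((h1.const_mul A).sub h2).add_const C
    have heq : g' x = A * (Real.exp (lam*x) * lam) - h/θ₀ := by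
      simp only [hg']; ring
    rw [heq]; exact h3
  set u : ℝ → ℝ := fun x => Real.exp (-lam*x) * (v x - g x) with hu
  have huderiv : ∀ x : ℝ, 0 ≤ x →
      HasDerivAt u (Real.exp (-lam*x) * ((v' x - lam * v x) - (g' x - lam * g x))) x := by
    intro x hx
    have he : HasDerivAt (fun y : ℝ => Real.exp (-lam*y)) (Real.exp (-lam*x) * (-lam)) x := by
      simpa using ((hasDerivAt_id x).const_mul (-lam)).exp
    have := he.mul ((hderiv x hx).sub (hgderiv x))
    exact this.congr_deriv (by simp only [Pi.sub_apply]; ring)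
  have hkey : ∀ x : ℝ, 0 ≤ x → g' x - lam * g x ≤ v' x - lam * v x := by
    intro x hx
    have h1 := hode x hx
    have h2 := hφlb (p - v x)
    have h3 : β + θ₀*p - h*x - θ₀ * v x ≤ σ^2/2 * v' x := by nlinarith
    have h4 : 2/σ^2 * (β + θ₀*p - h*x - θ₀ * v x) ≤ 2/σ^2 * (σ^2/2 * v' x) :=
      mul_le_mul_of_nonneg_left h3 (by positivity)
    have h5 : 2/σ^2 * (σ^2/2 * v' x) = v' x := by field_simp
    have h6 : 2/σ^2 * (β + θ₀*p - h*x - θ₀ * v x) = 2/σ^2*(β+θ₀*p) - 2*h/σ^2*x + lam * v x := by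
      rw [hlamdef]; field_simp; ring
    have hlamC : lam * C = -(2/σ^2)*(β+θ₀*p) - h/θ₀ := by
      rw [hlamdef, hC]; field_simp; ring
    have hlamh : lam * (h/θ₀) = -(2*h/σ^2) := by
      rw [hlamdef]; field_simp
    have hglg : g' x - lam * g x = 2/σ^2*(β+θ₀*p) - 2*h/σ^2 * x := by
      simp only [hg', hg]
      linear_combination x*hlamh - hlamC
    rw [hglg]
    rw [h5, h6] at h4
    linarith
  have hmono : MonotoneOn u (Set.Ici (0:ℝ)) := by
    apply monotoneOn_of_deriv_nonneg (convex_Ici 0)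
    · intro x hx
      exact ((huderiv x hx).continuousAt).continuousWithinAt
    · rw [interior_Ici]
      intro x hx
      exact ((huderiv x (le_of_lt hx)).differentiableAt).differentiableWithinAt
    · rw [interior_Ici]
      intro x hx
      rw [(huderiv x (le_of_lt hx)).deriv]
      exact mul_nonneg (Real.exp_pos _).le (sub_nonneg.2 (hkey x (le_of_lt hx)))
  have hAC : A + C = 0 := by rw [hA, hC]; ring
  have hu0 : u 0 = 0 := by
    have hg0 : g 0 = A + C := by simp [hg]
    show Real.exp (-lam*0) * (v 0 - g 0) = 0
    rw [hinit, hg0, hAC]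
    simp
  intro x hx
  have hux : 0 ≤ u x := by
    have := hmono (Set.mem_Ici.2 le_rfl) (Set.mem_Ici.2 hx) hx
    rw [hu0] at this
    exact this
  have hvg : g x ≤ v x := by
    have hep : (0:ℝ) < Real.exp (-lam*x) := Real.exp_pos _
    have hux' : 0 ≤ Real.exp (-lam*x) * (v x - g x) := hux
    have := (mul_nonneg_iff_of_pos_left hep).1 hux'
    linarith
  -- final estimate
  clear_value lam A C g g' u
  have h1 := hode x hx
  have h2 := hφlb (p - v x)
  have h3 : β - h*x + θ₀*p - θ₀ * v x ≤ σ^2/2 * v' x := by nlinarith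
  have h4 : β - h*x + θ₀*p - θ₀ * g x ≤ β - h*x + θ₀*p - θ₀ * v x := by
    have := mul_le_mul_of_nonneg_left hvg (le_of_lt hθ0')
    linarith
  have hθC : θ₀ * C = β + θ₀*p + h*σ^2/(2*θ₀) := by
    rw [hC]; field_simp
  have hhx : θ₀ * (h/θ₀ * x) = h * x := by field_simp
  have hgx : β - h*x + θ₀*p - θ₀ * g x = -θ₀*A*Real.exp (lam*x) - h*σ^2/(2*θ₀) := by
    simp only [hg]
    linear_combination hhx - hθC
  have hApos : 0 < -θ₀*A := by
    have e1 : -θ₀*A = β + θ₀*p + h*σ^2/(2*θ₀) := by rw [hA]; field_simp; ring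
    rw [e1]
    have hb2 : β > -(p*θ₀) + h*σ^2/(2*-θ₀) := by linarith [hβ]
    have e2 : h*σ^2/(2*-θ₀) = -(h*σ^2/(2*θ₀)) := by field_simp
    linarith [hb2, e2]
  have hterm2 : 0 < -(h*σ^2/(2*θ₀)) := by
    rw [neg_pos]
    exact div_neg_of_pos_of_neg (by positivity) (by linarith)
  have hpos : 0 < σ^2/2 * v' x := by
    have hep : 0 < Real.exp (lam*x) := Real.exp_pos _
    linarith [h3, h4, hgx, hterm2, mul_pos hApos hep]
  have h9 : 2/σ^2 * (σ^2/2 * v' x) = v' x := by field_simp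
  have h10 := mul_pos (show (0:ℝ) < 2/σ^2 by positivity) hpos
  rwa [h9] at h10
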